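/- Every monoid that is word-hyperbolic (as a semigroup, with respect to a regular combing R ⊆ A^+) is 1-extendable. -/

import Mathlib

/-- Evaluation of a word over `A` in `S^1` (the semigroup `S` with a new identity
adjoined), where `f : A → S`. The empty word evaluates to the adjoined identity,
and a nonempty word to the product of its letters in `S`. -/
def evalW {A S : Type*} [Semigroup S] (f : A → S) (w : List A) : WithOne S :=
  (w.map (fun a => (f a : WithOne S))).prod

/-- The multiplication table of a semigroup with respect to a combing `R`, with
equality interpreted in `S^1` (which agrees with equality in `S` for nonempty
words, and lets `ε` represent the adjoined identity). The alphabet is `A ⊕ Bool`,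
where `Sum.inr false` plays the role of `#1` and `Sum.inr true` of `#2`. -/
def tableS {A S : Type*} [Semigroup S] (f : A → S) (R : Language A) :
    Language (A ⊕ Bool) :=
  {w | ∃ u v x : List A, u ∈ R ∧ v ∈ R ∧ x ∈ R ∧
    evalW f (u ++ v) = evalW f x ∧
    w = u.map Sum.inl ++ [Sum.inr false] ++ v.map Sum.inl ++ [Sum.inr true] ++
      (x.map Sum.inl).reverse}


open ContextFreeGrammar

section Prelim

variable {A S : Type*} [Semigroup S]

lemma evalW_nil (f : A → S) : evalW f [] = 1 := rfl

lemma evalW_append (f : A → S) (u v : List A) :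
    evalW f (u ++ v) = evalW f u * evalW f v := by
  simp [evalW]

lemma evalW_ne_nil (f : A → S) {w : List A} (hw : w ≠ []) :
    ∃ s : S, evalW f w = ↑s := by
  induction w with
  | nil => exact absurd rfl hw
  | cons a w ih =>
    rcases eq_or_ne w [] with rfl | hw'
    · exact ⟨f a, by simp [evalW]⟩
    · obtain ⟨s, hs⟩ := ih hw'
      refine ⟨f a * s, ?_⟩
      have : evalW f (a :: w) = ↑(f a) * evalW f w := by simp [evalW]
      rw [this, hs, ← WithOne.coe_mul]

lemma regular_union_eps (R : Language A) (h : R.IsRegular) :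
    (R + {[]} : Language A).IsRegular := by
  obtain ⟨σ, _, M, hM⟩ := h
  refine ⟨σ × Bool, inferInstance, ⟨fun s a => (M.step s.1 a, false), (M.start, true),
    {s | s.1 ∈ M.accept ∨ s.2 = true}⟩, ?_⟩
  have key : ∀ (w : List A) (s : σ) (b : Bool), w ≠ [] →
      DFA.evalFrom ⟨fun s a => (M.step s.1 a, false), (M.start, true),
        {s : σ × Bool | s.1 ∈ M.accept ∨ s.2 = true}⟩ (s, b) w = (M.evalFrom s w, false) := by
    intro w
    induction w with
    | nil => intro s b h; exact absurd rfl h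
    | cons a w ih =>
      intro s b _
      rcases eq_or_ne w [] with rfl | hw
      · rfl
      · simp only [DFA.evalFrom, List.foldl_cons] at *
        exact ih _ _ hw
  ext w
  rw [Language.mem_add]
  rcases eq_or_ne w [] with rfl | hw
  · constructor
    · intro _; right; rfl
    · intro _; simp [DFA.mem_accepts, DFA.eval, DFA.evalFrom]
  · rw [DFA.mem_accepts, DFA.eval, key w _ _ hw]
    rw [← hM]
    constructor
    · rintro (h | h)
      · exact Or.inl h
      · simp at h
    · rintro (h | h)
      · exact Or.inl h
      · exact absurd h hw

end Prelim


universe uT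
variable {T : Type uT} {Q : Type} {N : Type}

inductive TrRun (tr : Q → T → List (List T × Q)) : Q → List T → List T → Q → Prop
  | nil (q : Q) : TrRun tr q [] [] q
  | cons {q : Q} {a : T} {o : List T} {q' : Q} {w y : List T} {q'' : Q} :
      (o, q') ∈ tr q a → TrRun tr q' w y q'' → TrRun tr q (a :: w) (o ++ y) q''

lemma TrRun.append {tr : Q → T → List (List T × Q)} {q w1 y1 q' w2 y2 q''} :
    TrRun tr q w1 y1 q' → TrRun tr q' w2 y2 q'' → TrRun tr q (w1 ++ w2) (y1 ++ y2) q'' := by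
  intro h1 h2
  induction h1 with
  | nil => exact h2
  | cons hmem _ ih => rw [List.cons_append, List.append_assoc]; exact TrRun.cons hmem (ih h2)

def annStr (tr : Q → T → List (List T × Q)) (allQ : List Q) :
    Q → List (Symbol T N) → List (List (Symbol T (Q × N × Q ⊕ Unit)) × Q)
  | q, [] => [([], q)]
  | q, Symbol.terminal a :: s =>
      (tr q a).flatMap (fun oq =>
        (annStr tr allQ oq.2 s).map (fun tq => (oq.1.map Symbol.terminal ++ tq.1, tq.2)))
  | q, Symbol.nonterminal X :: s =>
      allQ.flatMap (fun q' =>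
        (annStr tr allQ q' s).map
          (fun tq => (Symbol.nonterminal (Sum.inl (q, X, q')) :: tq.1, tq.2)))

def Corr (tr : Q → T → List (List T × Q)) (allQ : List Q)
    (p : Q) (s : List (Symbol T N)) (t : List (Symbol T (Q × N × Q ⊕ Unit))) (q : Q) : Prop :=
  (t, q) ∈ annStr tr allQ p s

variable {tr : Q → T → List (List T × Q)} {allQ : List Q}

lemma corr_nil_iff {p q : Q} {t : List (Symbol T (Q × N × Q ⊕ Unit))} :
    Corr tr allQ p ([] : List (Symbol T N)) t q ↔ t = [] ∧ q = p := by
  simp [Corr, annStr, Prod.ext_iff]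

lemma corr_nil (p : Q) : Corr tr allQ p ([] : List (Symbol T N)) [] p := by
  simp [Corr, annStr]

lemma corr_term_iff {p q : Q} {a : T} {s : List (Symbol T N)} {t} :
    Corr tr allQ p (Symbol.terminal a :: s) t q ↔
      ∃ o q' t', (o, q') ∈ tr p a ∧ Corr tr allQ q' s t' q ∧
        t = o.map Symbol.terminal ++ t' := by
  simp only [Corr, annStr, List.mem_flatMap, List.mem_map, Prod.exists, Prod.mk.injEq]
  constructor
  · rintro ⟨o, q', hmem, t', qf, hann, rfl, rfl⟩
    exact ⟨o, q', t', hmem, hann, rfl⟩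
  · rintro ⟨o, q', t', hmem, hann, rfl⟩
    exact ⟨o, q', hmem, t', q, hann, rfl, rfl⟩

lemma corr_nt_cons_iff {p q : Q} {X : N} {s : List (Symbol T N)} {t} :
    Corr tr allQ p (Symbol.nonterminal X :: s) t q ↔
      ∃ q' t', q' ∈ allQ ∧ Corr tr allQ q' s t' q ∧
        t = Symbol.nonterminal (Sum.inl (p, X, q')) :: t' := by
  simp only [Corr, annStr, List.mem_flatMap, List.mem_map, Prod.exists, Prod.mk.injEq]
  constructor
  · rintro ⟨q', hq', t', qf, hann, rfl, rfl⟩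
    exact ⟨q', t', hq', hann, rfl⟩
  · rintro ⟨q', t', hq', hann, rfl⟩
    exact ⟨q', hq', t', q, hann, rfl, rfl⟩

lemma corr_append {p r q : Q} {s1 s2 : List (Symbol T N)} {t1 t2} :
    Corr tr allQ p s1 t1 r → Corr tr allQ r s2 t2 q →
    Corr tr allQ p (s1 ++ s2) (t1 ++ t2) q := by
  intro h1 h2
  induction s1 generalizing p t1 with
  | nil => rw [corr_nil_iff] at h1; obtain ⟨rfl, rfl⟩ := h1; simpa using h2
  | cons sym s1 ih =>
    cases sym with
    | terminal a =>
      rw [corr_term_iff] at h1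
      obtain ⟨o, q', t', hmem, hann, rfl⟩ := h1
      rw [List.cons_append, corr_term_iff]
      exact ⟨o, q', t' ++ t2, hmem, ih hann, by rw [List.append_assoc]⟩
    | nonterminal X =>
      rw [corr_nt_cons_iff] at h1
      obtain ⟨q', t', hq', hann, rfl⟩ := h1
      rw [List.cons_append, corr_nt_cons_iff]
      exact ⟨q', t' ++ t2, hq', ih hann, rfl⟩

lemma corr_split {p q : Q} {s1 s2 : List (Symbol T N)} {t} :
    Corr tr allQ p (s1 ++ s2) t q →
    ∃ t1 t2 r, t = t1 ++ t2 ∧ Corr tr allQ p s1 t1 r ∧ Corr tr allQ r s2 t2 q := by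
  intro h
  induction s1 generalizing p t with
  | nil => exact ⟨[], t, p, rfl, corr_nil p, h⟩
  | cons sym s1 ih =>
    cases sym with
    | terminal a =>
      rw [List.cons_append, corr_term_iff] at h
      obtain ⟨o, q', t', hmem, hann, rfl⟩ := h
      obtain ⟨t1, t2, r, rfl, hc1, hc2⟩ := ih hann
      exact ⟨o.map Symbol.terminal ++ t1, t2, r, by rw [List.append_assoc],
        corr_term_iff.2 ⟨o, q', t1, hmem, hc1, rfl⟩, hc2⟩
    | nonterminal X =>
      rw [List.cons_append, corr_nt_cons_iff] at h
      obtain ⟨q', t', hq', hann, rfl⟩ := h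
      obtain ⟨t1, t2, r, rfl, hc1, hc2⟩ := ih hann
      exact ⟨Symbol.nonterminal (Sum.inl (p, X, q')) :: t1, t2, r, rfl,
        corr_nt_cons_iff.2 ⟨q', t1, hq', hc1, rfl⟩, hc2⟩

lemma corr_nt_singleton_iff (hallQ : ∀ q : Q, q ∈ allQ) {p q : Q} {X : N} {t} :
    Corr tr allQ p [Symbol.nonterminal X] t q ↔
      t = [Symbol.nonterminal (Sum.inl (p, X, q))] := by
  rw [corr_nt_cons_iff]
  constructor
  · rintro ⟨q', t', _, hc, rfl⟩
    rw [corr_nil_iff] at hc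
    obtain ⟨rfl, rfl⟩ := hc
    rfl
  · rintro rfl
    exact ⟨q, [], hallQ q, corr_nil q, rfl⟩

lemma corr_of_trRun {p q : Q} {w y : List T} (h : TrRun tr p w y q) :
    Corr tr allQ p (w.map Symbol.terminal)
      (y.map Symbol.terminal : List (Symbol T (Q × N × Q ⊕ Unit))) q := by
  induction h with
  | nil q => exact corr_nil q
  | cons hmem _ ih =>
    rw [List.map_cons, corr_term_iff]
    exact ⟨_, _, _, hmem, ih, by rw [List.map_append]⟩

lemma corr_terminal_only {p q : Q} {s : List (Symbol T N)} {y : List T}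
    (h : Corr tr allQ p s (y.map Symbol.terminal) q) :
    ∃ w, s = w.map Symbol.terminal ∧ TrRun tr p w y q := by
  induction s generalizing p y with
  | nil =>
    rw [corr_nil_iff] at h
    obtain ⟨hy, rfl⟩ := h
    obtain rfl : y = [] := by simpa using hy
    exact ⟨[], rfl, TrRun.nil _⟩
  | cons sym s ih =>
    cases sym with
    | terminal a =>
      rw [corr_term_iff] at h
      obtain ⟨o, q', t', hmem, hann, heq⟩ := h
      obtain ⟨y1, y2, rfl, hy1, hy2⟩ := List.map_eq_append_iff.mp heq
      obtain rfl : y1 = o := List.map_injective_iff.mpr (fun _ _ => Symbol.terminal.inj) hy1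
      obtain ⟨w', rfl, hrun⟩ := ih (hy2 ▸ hann)
      exact ⟨a :: w', rfl, TrRun.cons hmem hrun⟩
    | nonterminal X =>
      rw [corr_nt_cons_iff] at h
      obtain ⟨q', t', _, _, heq⟩ := h
      exact absurd heq (by cases y <;> simp)

lemma corr_split_nt {p q : Q} {s : List (Symbol T N)}
    {tl trr : List (Symbol T (Q × N × Q ⊕ Unit))} {ν : Q × N × Q ⊕ Unit}
    (h : Corr tr allQ p s (tl ++ Symbol.nonterminal ν :: trr) q) :
    ∃ sl X sr p1 p2, s = sl ++ Symbol.nonterminal X :: sr ∧ ν = Sum.inl (p1, X, p2) ∧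
      Corr tr allQ p sl tl p1 ∧ Corr tr allQ p2 sr trr q := by
  induction s generalizing p tl with
  | nil =>
    rw [corr_nil_iff] at h
    exact absurd h.1 (by simp)
  | cons sym s ih =>
    cases sym with
    | terminal a =>
      rw [corr_term_iff] at h
      obtain ⟨o, q', t', hmem, hann, heq⟩ := h
      have hsplit : ∃ tl'', tl = o.map Symbol.terminal ++ tl'' ∧
          t' = tl'' ++ Symbol.nonterminal ν :: trr := by
        rcases List.append_eq_append_iff.mp heq with ⟨a', ha1, ha2⟩ | ⟨c', hc1, hc2⟩
        · cases a' with
          | nil => exact ⟨[], by simpa using ha1.symm, by simpa using ha2.symm⟩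
          | cons x a'' =>
            exfalso
            have hx : x = Symbol.nonterminal ν := by
              have := ha2
              simp at this
              exact this.1.symm
            have : x ∈ o.map Symbol.terminal := ha1 ▸ (by simp)
            rw [hx] at this
            simp at this
        · exact ⟨c', hc1, hc2⟩
      obtain ⟨tl'', rfl, rfl⟩ := hsplit
      obtain ⟨sl, X, sr, p1, p2, rfl, rfl, hcl, hcr⟩ := ih hann
      exact ⟨Symbol.terminal a :: sl, X, sr, p1, p2, rfl, rfl,
        corr_term_iff.2 ⟨o, q', tl'', hmem, hcl, rfl⟩, hcr⟩
    | nonterminal X =>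
      rw [corr_nt_cons_iff] at h
      obtain ⟨q', t', hq', hann, heq⟩ := h
      cases tl with
      | nil =>
        simp only [List.nil_append, List.cons.injEq] at heq
        obtain ⟨hν, rfl⟩ := heq
        obtain rfl : ν = Sum.inl (p, X, q') := (Symbol.nonterminal.inj hν.symm).symm
        exact ⟨[], X, s, p, q', rfl, rfl, corr_nil p, hann⟩
      | cons htl tl' =>
        simp only [List.cons_append, List.cons.injEq] at heq
        obtain ⟨rfl, rfl⟩ := heq
        obtain ⟨sl, X', sr, p1, p2, rfl, rfl, hcl, hcr⟩ := ih hann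
        exact ⟨Symbol.nonterminal X :: sl, X', sr, p1, p2, rfl, rfl,
          corr_nt_cons_iff.2 ⟨q', tl', hq', hcl, rfl⟩, hcr⟩

open ContextFreeGrammar in
/-- The product of a grammar with a finite transducer. -/
noncomputable def prodGrammar (g : ContextFreeGrammar.{uT} T) (tr : Q → T → List (List T × Q))
    (allQ inits accs : List Q) : ContextFreeGrammar.{uT} T :=
  letI : DecidableEq (ContextFreeRule T (Q × g.NT × Q ⊕ Unit)) := Classical.decEq _
  { NT := Q × g.NT × Q ⊕ Unit
    initial := Sum.inr ()
    rules :=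
      ((inits.flatMap fun qi => accs.map fun qf =>
          (⟨Sum.inr (), [Symbol.nonterminal (Sum.inl (qi, g.initial, qf))]⟩ : ContextFreeRule T (Q × g.NT × Q ⊕ Unit))) ++
        (g.rules.toList.flatMap fun r => allQ.flatMap fun p =>
          (annStr tr allQ p r.output).map fun tq =>
            (⟨Sum.inl (p, r.input, tq.2), tq.1⟩ : ContextFreeRule T (Q × g.NT × Q ⊕ Unit)))).toFinset }

variable {g : ContextFreeGrammar.{uT} T} {inits accs : List Q}

lemma mem_prodGrammar_rules_iff {r' : ContextFreeRule T (Q × g.NT × Q ⊕ Unit)} :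
    r' ∈ (prodGrammar g tr allQ inits accs).rules ↔
      (∃ qi ∈ inits, ∃ qf ∈ accs,
        r' = ⟨Sum.inr (), [Symbol.nonterminal (Sum.inl (qi, g.initial, qf))]⟩) ∨
      (∃ r ∈ g.rules, ∃ p ∈ allQ, ∃ t q, Corr tr allQ p r.output t q ∧
        r' = ⟨Sum.inl (p, r.input, q), t⟩) := by
  classical
  simp only [prodGrammar, Corr]
  refine (@List.mem_toFinset _ (Classical.decEq _) _ _).trans ?_
  simp only [List.mem_append, List.mem_flatMap, List.mem_map, Finset.mem_toList]
  constructor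
  · rintro (⟨qi, hqi, qf, hqf, h⟩ | ⟨r, hr, p, hp, tq, hann, h⟩)
    · exact Or.inl ⟨qi, hqi, qf, hqf, h.symm⟩
    · exact Or.inr ⟨r, hr, p, hp, tq.1, tq.2, hann, h.symm⟩
  · rintro (⟨qi, hqi, qf, hqf, h⟩ | ⟨r, hr, p, hp, t, q, hann, h⟩)
    · exact Or.inl ⟨qi, hqi, qf, hqf, h.symm⟩
    · exact Or.inr ⟨r, hr, p, hp, (t, q), hann, h.symm⟩

lemma prodGrammar_fwd (hallQ : ∀ q : Q, q ∈ allQ) {s : List (Symbol T g.NT)} {w : List T}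
    (hder : g.Derives s (w.map Symbol.terminal)) :
    ∀ {p q : Q} {y : List T}, TrRun tr p w y q →
      ∃ t, Corr tr allQ p s t q ∧
        (prodGrammar g tr allQ inits accs).Derives t (y.map Symbol.terminal) := by
  induction hder using Relation.ReflTransGen.head_induction_on with
  | refl =>
    intro p q y hrun
    exact ⟨y.map Symbol.terminal, corr_of_trRun hrun, ContextFreeGrammar.Derives.refl _⟩
  | head hprod _ ih =>
    intro p q y hrun
    obtain ⟨t₁, hc₁, hd₁⟩ := ih hrun
    obtain ⟨r, hr, hrw⟩ := hprod
    obtain ⟨l, rr, hu, hv⟩ := hrw.exists_parts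
    subst hu hv
    rw [List.append_assoc] at hc₁
    obtain ⟨tl, t', p1, htt, hcl, hc'⟩ := corr_split hc₁
    obtain ⟨tout, trr, p2, htt2, hco, hcr⟩ := corr_split hc'
    subst htt2
    subst htt
    have hcorr : Corr tr allQ p (l ++ [Symbol.nonterminal r.input] ++ rr)
        (tl ++ [Symbol.nonterminal (Sum.inl (p1, r.input, p2))] ++ trr) q := by
      rw [List.append_assoc, List.append_assoc]
      exact corr_append hcl (corr_append ((corr_nt_singleton_iff hallQ).2 rfl) hcr)
    have hprod' : (prodGrammar g tr allQ inits accs).Produces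
        (tl ++ [Symbol.nonterminal (Sum.inl (p1, r.input, p2))] ++ trr)
        (tl ++ tout ++ trr) :=
      ⟨⟨Sum.inl (p1, r.input, p2), tout⟩,
        mem_prodGrammar_rules_iff.2 (Or.inr ⟨r, hr, p1, hallQ p1, tout, p2, hco, rfl⟩),
        ContextFreeRule.rewrites_of_exists_parts _ tl trr⟩
    refine ⟨_, hcorr, hprod'.trans_derives ?_⟩
    rwa [← List.append_assoc] at hd₁

lemma prodGrammar_bwd {t : List (Symbol T (Q × g.NT × Q ⊕ Unit))} {y : List T}
    (hder : (prodGrammar g tr allQ inits accs).Derives t (y.map Symbol.terminal)) :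
    ∀ {p q : Q} {s : List (Symbol T g.NT)}, Corr tr allQ p s t q →
      ∃ w, g.Derives s (w.map Symbol.terminal) ∧ TrRun tr p w y q := by
  induction hder using Relation.ReflTransGen.head_induction_on with
  | refl =>
    intro p q s hc
    obtain ⟨w, rfl, hrun⟩ := corr_terminal_only hc
    exact ⟨w, ContextFreeGrammar.Derives.refl _, hrun⟩
  | head hprod _ ih =>
    intro p q s hc
    obtain ⟨r', hr', hrw⟩ := hprod
    obtain ⟨tl, trr, hu, hv⟩ := hrw.exists_parts
    subst hu hv
    rw [List.append_assoc, List.singleton_append] at hc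
    obtain ⟨sl, X, sr, p1, p2, rfl, hν, hcl, hcr⟩ := corr_split_nt hc
    rcases mem_prodGrammar_rules_iff.1 hr' with ⟨qi, _, qf, _, rfl⟩ | ⟨r, hr, p', _, t0, q0, hco, rfl⟩
    · exact absurd hν (by simp)
    · simp only [Sum.inl.injEq, Prod.mk.injEq] at hν
      obtain ⟨rfl, rfl, rfl⟩ := hν
      have hc₂ := corr_append hcl (corr_append hco hcr)
      have hc₃ : Corr tr allQ p (sl ++ r.output ++ sr) (tl ++ (show List (Symbol T (prodGrammar g tr allQ inits accs).NT) from t0) ++ trr) q := by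
        rw [List.append_assoc tl (show List (Symbol T (prodGrammar g tr allQ inits accs).NT) from t0) trr]
        rw [List.append_assoc sl]
        exact hc₂
      obtain ⟨w, hd, hrun⟩ := ih hc₃
      refine ⟨w, ?_, hrun⟩
      refine ContextFreeGrammar.Produces.trans_derives ⟨r, hr, ?_⟩ hd
      have hrw2 := ContextFreeRule.rewrites_of_exists_parts r sl sr
      rwa [List.append_assoc, List.singleton_append] at hrw2

/-- The image of a language under a finite transducer. -/
def trLang (tr : Q → T → List (List T × Q)) (inits accs : List Q) (L : Language T) :
    Language T :=
  {y | ∃ w ∈ L, ∃ qi ∈ inits, ∃ qf ∈ accs, TrRun tr qi w y qf}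

theorem trLang_isContextFree (hallQ : ∀ q : Q, q ∈ allQ) {L : Language T}
    (hL : L.IsContextFree) (tr : Q → T → List (List T × Q)) (inits accs : List Q) :
    (trLang tr inits accs L).IsContextFree := by
  obtain ⟨g, rfl⟩ := hL
  refine ⟨prodGrammar g tr allQ inits accs, ?_⟩
  ext y
  rw [ContextFreeGrammar.mem_language_iff]
  constructor
  · intro hder
    rcases hder.eq_or_head with heq | ⟨t₁, hprod, hder'⟩
    · exfalso
      cases y with
      | nil => simp at heq
      | cons a y => simp at heq
    · obtain ⟨r', hr', hrw⟩ := hprod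
      obtain ⟨tl, trr, hu, hv⟩ := hrw.exists_parts
      have htl : tl = [] ∧ trr = [] := by
        have hlen := congrArg List.length hu
        simp at hlen
        constructor <;> [exact List.eq_nil_of_length_eq_zero (by omega);
          exact List.eq_nil_of_length_eq_zero (by omega)]
      obtain ⟨rfl, rfl⟩ := htl
      simp only [List.nil_append, List.append_nil] at hu hv
      have hinput : r'.input = Sum.inr () := by
        have := hu
        simp at this
        exact this.symm
      rcases mem_prodGrammar_rules_iff.1 hr' with ⟨qi, hqi, qf, hqf, rfl⟩ |
        ⟨r, hr, p', hp', t0, q0, hco, rfl⟩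
      · subst hv
        obtain ⟨w, hd, hrun⟩ := prodGrammar_bwd hder'
          ((corr_nt_singleton_iff hallQ).2 rfl)
        exact ⟨w, ContextFreeGrammar.mem_language_iff _ _ |>.2 hd, qi, hqi, qf, hqf, hrun⟩
      · exact absurd hinput (by simp)
  · rintro ⟨w, hw, qi, hqi, qf, hqf, hrun⟩
    rw [ContextFreeGrammar.mem_language_iff] at hw
    obtain ⟨t, hc, hd⟩ := prodGrammar_fwd hallQ hw hrun
    rw [corr_nt_singleton_iff hallQ] at hc
    subst hc
    refine ContextFreeGrammar.Produces.trans_derives ?_ hd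
    exact ⟨⟨Sum.inr (), [Symbol.nonterminal (Sum.inl (qi, g.initial, qf))]⟩,
      mem_prodGrammar_rules_iff.2 (Or.inl ⟨qi, hqi, qf, hqf, rfl⟩),
      by simpa [prodGrammar] using ContextFreeRule.rewrites_of_exists_parts _ [] []⟩


section Machine
variable {A : Type*} [DecidableEq A]

/-- States of the transducer that optionally deletes occurrences of a fixed identity word. -/
inductive St (k : ℕ) : Type where
  | idq | pCopy | mPre | mCopy
  | pDel (i : Fin (k+1)) | mDel (i : Fin (k+1))
  | s0 (i : Fin (k+1)) | s1 (i : Fin (k+1)) | s2 (i : Fin (k+1))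
deriving DecidableEq

def allSt (k : ℕ) : List (St k) :=
  [.idq, .pCopy, .mPre, .mCopy] ++
    (List.finRange (k+1)).flatMap (fun i => [.pDel i, .mDel i, .s0 i, .s1 i, .s2 i])

lemma mem_allSt {k : ℕ} (q : St k) : q ∈ allSt k := by
  cases q <;> simp [allSt, List.mem_flatMap] <;>
    exact ⟨_, List.mem_finRange _, by simp⟩

/-- The transducer deleting (optionally) a prefix `w` before `#1`, a factor `w` after `#1`,
and (after both) a suffix `w.reverse` after `#2`. -/
def trE (w : List A) : St w.length → (A ⊕ Bool) → List (List (A ⊕ Bool) × St w.length)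
  | .idq, σ => [([σ], .idq)]
  | .pCopy, σ => [([σ], .pCopy)]
  | .mCopy, σ => [([σ], .mCopy)]
  | .mPre, .inl a => [([.inl a], .mPre)]
  | .mPre, .inr false => [([.inr false], .mDel 0)]
  | .mPre, .inr true => []
  | .pDel i, .inl a =>
      if h : (i : ℕ) < w.length then
        (if w[(i : ℕ)] = a then [([], .pDel ⟨(i : ℕ) + 1, by omega⟩)] else []) else []
  | .pDel i, .inr b =>
      if (i : ℕ) = w.length ∧ b = false then [([.inr false], .pCopy)] else []
  | .mDel i, .inl a =>
      if h : (i : ℕ) < w.length then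
        (if w[(i : ℕ)] = a then [([], .mDel ⟨(i : ℕ) + 1, by omega⟩)] else []) else []
  | .mDel i, .inr b =>
      if (i : ℕ) = w.length ∧ b = true then [([.inr true], .mCopy)] else []
  | .s0 i, .inl a =>
      if h : (i : ℕ) < w.length then
        (if w[(i : ℕ)] = a then [([], .s0 ⟨(i : ℕ) + 1, by omega⟩)] else []) else []
  | .s0 i, .inr b =>
      if (i : ℕ) = w.length ∧ b = false then [([.inr false], .s1 0)] else []
  | .s1 i, .inl a =>
      if h : (i : ℕ) < w.length then
        (if w[(i : ℕ)] = a then [([], .s1 ⟨(i : ℕ) + 1, by omega⟩)] else []) else []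
  | .s1 i, .inr b =>
      if (i : ℕ) = w.length ∧ b = true then [([.inr true], .s2 0)] else []
  | .s2 i, .inl a =>
      if h : (i : ℕ) < w.length then
        (if w.reverse[(i : ℕ)]'(by simpa using h) = a then
          [([], .s2 ⟨(i : ℕ) + 1, by omega⟩)] else []) else []
  | .s2 _, .inr _ => []

def initsE (w : List A) : List (St w.length) := [.idq, .pDel 0, .mPre, .s0 0]

def accsE (w : List A) : List (St w.length) :=
  [.idq, .pCopy, .mCopy, .s2 (Fin.last w.length)]

end Machine

section MachineRuns
variable {A : Type*} [DecidableEq A] {Q : Type}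

lemma run_copy {tr : Q → (A ⊕ Bool) → List (List (A ⊕ Bool) × Q)} {st : Q}
    (hst : ∀ σ, tr st σ = [([σ], st)]) :
    ∀ {u y : List (A ⊕ Bool)} {q'}, TrRun tr st u y q' → y = u ∧ q' = st := by
  intro u y q' h
  induction u generalizing y with
  | nil => cases h; exact ⟨rfl, rfl⟩
  | cons σ u ih =>
    cases h with
    | cons hmem hrun =>
      rw [hst] at hmem
      simp at hmem
      obtain ⟨rfl, rfl⟩ := hmem
      obtain ⟨rfl, rfl⟩ := ih hrun
      exact ⟨rfl, rfl⟩

lemma run_copy_build {tr : Q → (A ⊕ Bool) → List (List (A ⊕ Bool) × Q)} {st : Q}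
    (hst : ∀ σ, tr st σ = [([σ], st)]) (u : List (A ⊕ Bool)) : TrRun tr st u u st := by
  induction u with
  | nil => exact TrRun.nil st
  | cons σ u ih =>
    have h := TrRun.cons (show ([σ], st) ∈ tr st σ by rw [hst]; simp) ih
    simpa using h

variable {tr : Q → (A ⊕ Bool) → List (List (A ⊕ Bool) × Q)} {v : List A}
  {F : ℕ → Q} {exitb : Bool} {qexit : Q} {acc : Q → Prop}

/-- Inversion for a "match the word `v` while outputting nothing" family of states. -/
lemma run_fam_inv
    (hstep : ∀ i a o q', ((o, q') ∈ tr (F i) (Sum.inl a) ↔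
      i < v.length ∧ v[i]? = some a ∧ o = [] ∧ q' = F (i+1)))
    (hexit : ∀ i b o q', ((o, q') ∈ tr (F i) (Sum.inr b) ↔
      v.length ≤ i ∧ b = exitb ∧ o = [Sum.inr exitb] ∧ q' = qexit))
    (hFnacc : ∀ j, ¬ acc (F j)) :
    ∀ u y qf i, TrRun tr (F i) u y qf → acc qf →
      ∃ rest y', u = ((v.drop i).map Sum.inl) ++ (Sum.inr exitb :: rest) ∧
        y = Sum.inr exitb :: y' ∧ TrRun tr qexit rest y' qf := by
  intro u
  induction u with
  | nil =>
    intro y qf i h hacc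
    cases h
    exact absurd hacc (hFnacc i)
  | cons σ u ih =>
    intro y qf i h hacc
    cases h with
    | cons hmem hrun =>
      cases σ with
      | inl a =>
        rw [hstep] at hmem
        obtain ⟨hlt, ha, rfl, rfl⟩ := hmem
        obtain ⟨rest, y', hu, hy, hcont⟩ := ih _ _ _ hrun hacc
        rw [List.getElem?_eq_some_iff] at ha
        obtain ⟨hlt', ha⟩ := ha
        refine ⟨rest, y', ?_, by simpa using hy, hcont⟩
        rw [List.drop_eq_getElem_cons hlt, ha, hu]
        simp
      | inr b =>
        rw [hexit] at hmem
        obtain ⟨hle, rfl, rfl, rfl⟩ := hmem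
        exact ⟨u, _, by rw [List.drop_of_length_le hle]; simp, rfl, hrun⟩

lemma run_fam_build
    (hstep : ∀ i a o q', ((o, q') ∈ tr (F i) (Sum.inl a) ↔
      i < v.length ∧ v[i]? = some a ∧ o = [] ∧ q' = F (i+1)))
    (hexit : ∀ i b o q', ((o, q') ∈ tr (F i) (Sum.inr b) ↔
      v.length ≤ i ∧ b = exitb ∧ o = [Sum.inr exitb] ∧ q' = qexit)) :
    ∀ {rest y' : List (A ⊕ Bool)} {qf}, TrRun tr qexit rest y' qf → ∀ i,
      TrRun tr (F i) (((v.drop i).map Sum.inl) ++ (Sum.inr exitb :: rest))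
        (Sum.inr exitb :: y') qf := by
  intro rest y' qf hcont i
  have key : ∀ n i, n = v.length - i →
      TrRun tr (F i) (((v.drop i).map Sum.inl) ++ (Sum.inr exitb :: rest))
        (Sum.inr exitb :: y') qf := by
    intro n
    induction n with
    | zero =>
      intro i hi
      have hle : v.length ≤ i := by omega
      rw [List.drop_of_length_le hle]
      simp only [List.map_nil, List.nil_append]
      have hmem : ([Sum.inr exitb], qexit) ∈ tr (F i) (Sum.inr exitb) :=
        (hexit i exitb _ _).2 ⟨hle, rfl, rfl, rfl⟩
      have h := TrRun.cons hmem hcont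
      simpa using h
    | succ n ihn =>
      intro i hi
      have hlt : i < v.length := by omega
      rw [List.drop_eq_getElem_cons hlt]
      simp only [List.map_cons, List.cons_append]
      have hmem : (([] : List (A ⊕ Bool)), F (i+1)) ∈ tr (F i) (Sum.inl v[i]) :=
        (hstep i v[i] _ _).2 ⟨hlt, by simp, rfl, rfl⟩
      have h := TrRun.cons hmem (ihn (i+1) (by omega))
      simpa using h
  exact key (v.length - i) i rfl

lemma run_fam_inv_noexit
    (hstep : ∀ i a o q', ((o, q') ∈ tr (F i) (Sum.inl a) ↔
      i < v.length ∧ v[i]? = some a ∧ o = [] ∧ q' = F (i+1)))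
    (hexit : ∀ i b, tr (F i) (Sum.inr b) = [])
    (haccF : ∀ j, acc (F j) → v.length ≤ j) :
    ∀ u y qf i, TrRun tr (F i) u y qf → acc qf →
      u = ((v.drop i).map Sum.inl) ∧ y = [] := by
  intro u
  induction u with
  | nil =>
    intro y qf i h hacc
    cases h
    rw [List.drop_of_length_le (haccF i hacc)]
    exact ⟨rfl, rfl⟩
  | cons σ u ih =>
    intro y qf i h hacc
    cases h with
    | cons hmem hrun =>
      cases σ with
      | inl a =>
        rw [hstep] at hmem
        obtain ⟨hlt, ha, rfl, rfl⟩ := hmem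
        obtain ⟨hu, hy⟩ := ih _ _ _ hrun hacc
        rw [List.getElem?_eq_some_iff] at ha
        obtain ⟨hlt', ha⟩ := ha
        refine ⟨?_, by simpa using hy⟩
        rw [List.drop_eq_getElem_cons hlt, ha, hu]
        simp
      | inr b =>
        rw [hexit] at hmem
        simp at hmem

lemma run_fam_build_noexit
    (hstep : ∀ i a o q', ((o, q') ∈ tr (F i) (Sum.inl a) ↔
      i < v.length ∧ v[i]? = some a ∧ o = [] ∧ q' = F (i+1))) :
    ∀ i, i ≤ v.length → TrRun tr (F i) ((v.drop i).map Sum.inl) [] (F v.length) := by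
  intro i hile
  have key : ∀ n i, i ≤ v.length → n = v.length - i →
      TrRun tr (F i) ((v.drop i).map Sum.inl) [] (F v.length) := by
    intro n
    induction n with
    | zero =>
      intro i hile hi
      obtain rfl : i = v.length := by omega
      rw [List.drop_length]
      exact TrRun.nil _
    | succ n ihn =>
      intro i hile hi
      have hlt : i < v.length := by omega
      rw [List.drop_eq_getElem_cons hlt]
      simp only [List.map_cons]
      have hmem : (([] : List (A ⊕ Bool)), F (i+1)) ∈ tr (F i) (Sum.inl v[i]) :=
        (hstep i v[i] _ _).2 ⟨hlt, by simp, rfl, rfl⟩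
      have h := TrRun.cons hmem (ihn (i+1) (by omega) (by omega))
      simpa using h
  exact key (v.length - i) i hile rfl

end MachineRuns

section Families
variable {A : Type*} [DecidableEq A] (w : List A)

def pF : ℕ → St w.length := fun i => .pDel ⟨min i w.length, by omega⟩
def mF : ℕ → St w.length := fun i => .mDel ⟨min i w.length, by omega⟩
def s0F : ℕ → St w.length := fun i => .s0 ⟨min i w.length, by omega⟩
def s1F : ℕ → St w.length := fun i => .s1 ⟨min i w.length, by omega⟩
def s2F : ℕ → St w.length := fun i => .s2 ⟨min i w.length, by omega⟩

lemma pF_step : ∀ i a o q', ((o, q') ∈ trE w (pF w i) (Sum.inl a) ↔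
    i < w.length ∧ w[i]? = some a ∧ o = [] ∧ q' = pF w (i+1)) := by
  intro i a o q'
  by_cases hi : i < w.length
  · have hmin : min i w.length = i := by omega
    have hmin2 : min (i+1) w.length = i + 1 := by omega
    simp [pF, trE, hmin, hmin2, hi, List.getElem?_eq_some_iff, Fin.ext_iff, eq_comm,
      and_assoc]
  · have hmin : min i w.length = w.length := by omega
    simp [pF, trE, hmin, hi]

lemma pF_exit : ∀ i b o q', ((o, q') ∈ trE w (pF w i) (Sum.inr b) ↔
    w.length ≤ i ∧ b = false ∧ o = [Sum.inr false] ∧ q' = St.pCopy) := by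
  intro i b o q'
  by_cases hi : w.length ≤ i
  · have hmin : min i w.length = w.length := by omega
    simp [pF, trE, hmin, hi, and_assoc]
  · have hmin : min i w.length = i := by omega
    simp [pF, trE, hmin]
    omega

lemma mF_step : ∀ i a o q', ((o, q') ∈ trE w (mF w i) (Sum.inl a) ↔
    i < w.length ∧ w[i]? = some a ∧ o = [] ∧ q' = mF w (i+1)) := by
  intro i a o q'
  by_cases hi : i < w.length
  · have hmin : min i w.length = i := by omega
    have hmin2 : min (i+1) w.length = i + 1 := by omega
    simp [mF, trE, hmin, hmin2, hi, List.getElem?_eq_some_iff, Fin.ext_iff, eq_comm,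
      and_assoc]
  · have hmin : min i w.length = w.length := by omega
    simp [mF, trE, hmin, hi]

lemma s0F_step : ∀ i a o q', ((o, q') ∈ trE w (s0F w i) (Sum.inl a) ↔
    i < w.length ∧ w[i]? = some a ∧ o = [] ∧ q' = s0F w (i+1)) := by
  intro i a o q'
  by_cases hi : i < w.length
  · have hmin : min i w.length = i := by omega
    have hmin2 : min (i+1) w.length = i + 1 := by omega
    simp [s0F, trE, hmin, hmin2, hi, List.getElem?_eq_some_iff, Fin.ext_iff, eq_comm,
      and_assoc]
  · have hmin : min i w.length = w.length := by omega
    simp [s0F, trE, hmin, hi]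

lemma s1F_step : ∀ i a o q', ((o, q') ∈ trE w (s1F w i) (Sum.inl a) ↔
    i < w.length ∧ w[i]? = some a ∧ o = [] ∧ q' = s1F w (i+1)) := by
  intro i a o q'
  by_cases hi : i < w.length
  · have hmin : min i w.length = i := by omega
    have hmin2 : min (i+1) w.length = i + 1 := by omega
    simp [s1F, trE, hmin, hmin2, hi, List.getElem?_eq_some_iff, Fin.ext_iff, eq_comm,
      and_assoc]
  · have hmin : min i w.length = w.length := by omega
    simp [s1F, trE, hmin, hi]

lemma s2F_step : ∀ i a o q', ((o, q') ∈ trE w (s2F w i) (Sum.inl a) ↔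
    i < w.reverse.length ∧ w.reverse[i]? = some a ∧ o = [] ∧ q' = s2F w (i+1)) := by
  intro i a o q'
  by_cases hi : i < w.length
  · have hmin : min i w.length = i := by omega
    have hmin2 : min (i+1) w.length = i + 1 := by omega
    simp [s2F, trE, hmin, hmin2, hi, List.getElem?_eq_some_iff, Fin.ext_iff, eq_comm,
      and_assoc]
  · have hmin : min i w.length = w.length := by omega
    simp [s2F, trE, hmin, hi]

lemma mF_exit : ∀ i b o q', ((o, q') ∈ trE w (mF w i) (Sum.inr b) ↔
    w.length ≤ i ∧ b = true ∧ o = [Sum.inr true] ∧ q' = St.mCopy) := by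
  intro i b o q'
  by_cases hi : w.length ≤ i
  · have hmin : min i w.length = w.length := by omega
    simp [mF, trE, hmin, hi, and_assoc]
  · have hmin : min i w.length = i := by omega
    simp [mF, trE, hmin]
    omega

lemma s0F_exit : ∀ i b o q', ((o, q') ∈ trE w (s0F w i) (Sum.inr b) ↔
    w.length ≤ i ∧ b = false ∧ o = [Sum.inr false] ∧ q' = s1F w 0) := by
  intro i b o q'
  by_cases hi : w.length ≤ i
  · have hmin : min i w.length = w.length := by omega
    simp [s0F, s1F, trE, hmin, hi, and_assoc, Fin.ext_iff]
  · have hmin : min i w.length = i := by omega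
    simp [s0F, trE, hmin]
    omega

lemma s1F_exit : ∀ i b o q', ((o, q') ∈ trE w (s1F w i) (Sum.inr b) ↔
    w.length ≤ i ∧ b = true ∧ o = [Sum.inr true] ∧ q' = s2F w 0) := by
  intro i b o q'
  by_cases hi : w.length ≤ i
  · have hmin : min i w.length = w.length := by omega
    simp [s1F, s2F, trE, hmin, hi, and_assoc, Fin.ext_iff]
  · have hmin : min i w.length = i := by omega
    simp [s1F, trE, hmin]
    omega

lemma s2F_exit : ∀ i b, trE w (s2F w i) (Sum.inr b) = [] := by
  intro i b
  rfl

lemma pF_nacc : ∀ j, ¬ (pF w j ∈ accsE w) := by intro j; simp [pF, accsE]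
lemma mF_nacc : ∀ j, ¬ (mF w j ∈ accsE w) := by intro j; simp [mF, accsE]
lemma s0F_nacc : ∀ j, ¬ (s0F w j ∈ accsE w) := by intro j; simp [s0F, accsE]
lemma s1F_nacc : ∀ j, ¬ (s1F w j ∈ accsE w) := by intro j; simp [s1F, accsE]
lemma s2F_acc : ∀ j, s2F w j ∈ accsE w → w.reverse.length ≤ j := by
  intro j h
  simp [s2F, accsE, Fin.ext_iff, Fin.last] at h
  simp
  omega

lemma run_idq {u y : List (A ⊕ Bool)} {q'} (h : TrRun (trE w) .idq u y q') :
    y = u ∧ q' = .idq := run_copy (fun _ => rfl) h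

lemma run_pCopy {u y : List (A ⊕ Bool)} {q'} (h : TrRun (trE w) .pCopy u y q') :
    y = u ∧ q' = .pCopy := run_copy (fun _ => rfl) h

lemma run_mCopy {u y : List (A ⊕ Bool)} {q'} (h : TrRun (trE w) .mCopy u y q') :
    y = u ∧ q' = .mCopy := run_copy (fun _ => rfl) h

lemma run_mPre_inv {u rest y : List (A ⊕ Bool)} {qf} (hnr : ∀ a ∈ u, ∃ c, a = Sum.inl c)
    (h : TrRun (trE w) .mPre (u ++ (Sum.inr false :: rest)) y qf) :
    ∃ y', y = u ++ (Sum.inr false :: y') ∧ TrRun (trE w) (mF w 0) rest y' qf := by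
  induction u generalizing y with
  | nil =>
    cases h with
    | cons hmem hrun =>
      simp only [trE] at hmem
      simp at hmem
      obtain ⟨rfl, rfl⟩ := hmem
      refine ⟨_, rfl, ?_⟩
      have : mF w 0 = St.mDel 0 := by simp [mF, Fin.ext_iff]
      rw [this]
      exact hrun
  | cons σ u ih =>
    obtain ⟨c, rfl⟩ := hnr σ (by simp)
    cases h with
    | cons hmem hrun =>
      simp only [trE] at hmem
      simp at hmem
      obtain ⟨rfl, rfl⟩ := hmem
      obtain ⟨y', rfl, hcont⟩ := ih (fun a ha => hnr a (by simp [ha])) hrun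
      exact ⟨y', rfl, hcont⟩

lemma run_mPre_build {u rest y' : List (A ⊕ Bool)} {qf} (hnr : ∀ a ∈ u, ∃ c, a = Sum.inl c)
    (hcont : TrRun (trE w) (mF w 0) rest y' qf) :
    TrRun (trE w) .mPre (u ++ (Sum.inr false :: rest)) (u ++ (Sum.inr false :: y')) qf := by
  induction u with
  | nil =>
    have hmem : ([Sum.inr false], mF w 0) ∈ trE w .mPre (Sum.inr false) := by
      have : mF w 0 = St.mDel 0 := by simp [mF, Fin.ext_iff]
      rw [this, trE]
      simp
    have h := TrRun.cons hmem hcont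
    simpa using h
  | cons σ u ih =>
    obtain ⟨c, rfl⟩ := hnr σ (by simp)
    have hmem : ([Sum.inl c], St.mPre) ∈ trE w .mPre (Sum.inl c) := by rw [trE]; simp
    have h := TrRun.cons hmem (ih (fun a ha => hnr a (by simp [ha])))
    simpa using h

end Families

section Image
variable {A S : Type*} [DecidableEq A] [Semigroup S]

lemma evalW_ne_one (f : A → S) {v : List A} (hv : v ≠ []) : evalW f v ≠ 1 := by
  obtain ⟨s, hs⟩ := evalW_ne_nil f hv
  simp [hs]

lemma marker_eq : ∀ (a b : List A) (c d : Bool) (r s : List (A ⊕ Bool)),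
    a.map Sum.inl ++ Sum.inr c :: r = b.map Sum.inl ++ Sum.inr d :: s →
    a = b ∧ c = d ∧ r = s := by
  intro a
  induction a with
  | nil =>
    intro b c d r s h
    cases b with
    | nil => simpa using h
    | cons x b => simp at h
  | cons x a ih =>
    intro b c d r s h
    cases b with
    | nil => simp at h
    | cons x' b =>
      simp only [List.map_cons, List.cons_append, List.cons.injEq, Sum.inl.injEq] at h
      obtain ⟨rfl, h⟩ := h
      obtain ⟨rfl, rfl, rfl⟩ := ih b c d r s h
      exact ⟨rfl, rfl, rfl⟩

lemma table_word_form (u v x : List A) :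
    u.map Sum.inl ++ [Sum.inr false] ++ v.map Sum.inl ++ [Sum.inr true] ++
        ((x.map Sum.inl).reverse : List (A ⊕ Bool)) =
      u.map Sum.inl ++ (Sum.inr false ::
        (v.map Sum.inl ++ (Sum.inr true :: x.reverse.map Sum.inl))) := by
  simp [List.append_assoc]

theorem image_eq (f : A → S) (R : Language A)
    (hRne : ∀ v ∈ R, v ≠ []) (w_e : List A) (hwe : w_e ∈ R) (e : S)
    (hevale : evalW f w_e = ↑e) (hid : ∀ s : S, s * e = s ∧ e * s = s) :
    trLang (trE w_e) (initsE w_e) (accsE w_e) (tableS f R) = tableS f (R + {[]}) := by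
  have hwene : w_e ≠ [] := hRne _ hwe
  have hel : ∀ v : List A, v ≠ [] → (↑e) * evalW f v = evalW f v := by
    intro v hv
    obtain ⟨s, hs⟩ := evalW_ne_nil f hv
    rw [hs, ← WithOne.coe_mul, (hid s).2]
  have her : ∀ v : List A, v ≠ [] → evalW f v * (↑e) = evalW f v := by
    intro v hv
    obtain ⟨s, hs⟩ := evalW_ne_nil f hv
    rw [hs, ← WithOne.coe_mul, (hid s).1]
  ext y
  constructor
  · rintro ⟨wd, ⟨u, v, x, hu, hv, hx, heval, rfl⟩, qi, hqi, qf, hqf, hrun⟩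
    rw [table_word_form] at hrun
    simp only [initsE, List.mem_cons, List.not_mem_nil, or_false] at hqi
    rcases hqi with rfl | rfl | rfl | rfl
    · -- identity branch
      obtain ⟨rfl, rfl⟩ := run_idq w_e hrun
      exact ⟨u, v, x, Or.inl hu, Or.inl hv, Or.inl hx, heval, (table_word_form u v x).symm ▸ rfl⟩
    · -- prefix deletion branch
      have h0 : St.pDel (0 : Fin (w_e.length + 1)) = pF w_e 0 := by simp [pF, Fin.ext_iff]
      rw [h0] at hrun
      obtain ⟨rest, y', hwd, rfl, hcont⟩ :=
        run_fam_inv (pF_step w_e) (pF_exit w_e) (pF_nacc w_e) _ _ _ _ hrun hqf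
      obtain ⟨rfl, rfl⟩ := run_pCopy w_e hcont
      rw [List.drop_zero] at hwd
      obtain ⟨hueq, -, hreq⟩ := marker_eq _ _ _ _ _ _ hwd
      subst hreq
      rw [hueq] at heval
      refine ⟨[], v, x, Or.inr rfl, Or.inl hv, Or.inl hx, ?_, ?_⟩
      · rw [evalW_append, hevale, hel v (hRne v hv)] at heval
        simpa [evalW_append] using heval
      · rw [table_word_form]
        simp
    · -- middle deletion branch
      obtain ⟨y', rfl, hcont⟩ := run_mPre_inv w_e (by simp) hrun
      obtain ⟨rest2, y2, hrest, rfl, hcont2⟩ :=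
        run_fam_inv (mF_step w_e) (mF_exit w_e) (mF_nacc w_e) _ _ _ _ hcont hqf
      obtain ⟨rfl, rfl⟩ := run_mCopy w_e hcont2
      rw [List.drop_zero] at hrest
      obtain ⟨hveq, -, hreq⟩ := marker_eq _ _ _ _ _ _ hrest
      subst hreq
      rw [hveq] at heval
      refine ⟨u, [], x, Or.inl hu, Or.inr rfl, Or.inl hx, ?_, ?_⟩
      · rw [evalW_append, hevale, her u (hRne u hu)] at heval
        simpa [evalW_append] using heval
      · rw [table_word_form]
        simp
    · -- full deletion branch
      have h0 : St.s0 (0 : Fin (w_e.length + 1)) = s0F w_e 0 := by simp [s0F, Fin.ext_iff]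
      rw [h0] at hrun
      obtain ⟨rest, y', hwd, rfl, hcont⟩ :=
        run_fam_inv (s0F_step w_e) (s0F_exit w_e) (s0F_nacc w_e) _ _ _ _ hrun hqf
      rw [List.drop_zero] at hwd
      obtain ⟨hueq, -, hreq⟩ := marker_eq _ _ _ _ _ _ hwd
      subst hreq
      obtain ⟨rest2, y2, hrest, rfl, hcont2⟩ :=
        run_fam_inv (s1F_step w_e) (s1F_exit w_e) (s1F_nacc w_e) _ _ _ _ hcont hqf
      rw [List.drop_zero] at hrest
      obtain ⟨hveq, -, hreq⟩ := marker_eq _ _ _ _ _ _ hrest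
      subst hreq
      obtain ⟨hx2, rfl⟩ :=
        run_fam_inv_noexit (s2F_step w_e) (s2F_exit w_e) (s2F_acc w_e) _ _ _ _ hcont2 hqf
      rw [List.drop_zero] at hx2
      refine ⟨[], [], [], Or.inr rfl, Or.inr rfl, Or.inr rfl, rfl, by simp⟩
  · rintro ⟨u, v, x, hu, hv, hx, heval, rfl⟩
    simp only [Language.mem_add, Set.mem_singleton_iff] at hu hv hx
    rcases hx with hx | rfl
    · rcases hu with hu | rfl
      · rcases hv with hv | rfl
        · -- all nonempty: identity branch
          refine ⟨_, ⟨u, v, x, hu, hv, hx, heval, rfl⟩, .idq, by simp [initsE],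
            .idq, by simp [accsE], ?_⟩
          exact run_copy_build (fun _ => rfl) _
        · -- v = []: middle deletion branch
          have hune := hRne u hu
          have heval' : evalW f (u ++ w_e) = evalW f x := by
            rw [evalW_append, hevale, her u hune]
            rw [List.append_nil] at heval
            exact heval
          refine ⟨_, ⟨u, w_e, x, hu, hwe, hx, heval', rfl⟩, .mPre, by simp [initsE],
            .mCopy, by simp [accsE], ?_⟩
          rw [table_word_form u w_e x, table_word_form u [] x]
          have hcont : TrRun (trE w_e) (mF w_e 0)
              (w_e.map Sum.inl ++ (Sum.inr true :: x.reverse.map Sum.inl))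
              (Sum.inr true :: x.reverse.map Sum.inl) .mCopy := by
            have h := run_fam_build (mF_step w_e) (mF_exit w_e)
              (run_copy_build (fun _ => rfl) (x.reverse.map Sum.inl)) 0
            simpa using h
          have h := run_mPre_build w_e (u := u.map Sum.inl) (by simp) hcont
          simpa using h
      · -- u = []: prefix deletion branch
        rcases hv with hv | rfl
        · have hvne := hRne v hv
          have heval' : evalW f (w_e ++ v) = evalW f x := by
            rw [evalW_append, hevale, hel v hvne]
            rw [List.nil_append] at heval
            exact heval
          refine ⟨_, ⟨w_e, v, x, hwe, hv, hx, heval', rfl⟩, .pDel 0, by simp [initsE],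
            .pCopy, by simp [accsE], ?_⟩
          rw [table_word_form w_e v x, table_word_form [] v x]
          have h0 : St.pDel (0 : Fin (w_e.length + 1)) = pF w_e 0 := by
            simp [pF, Fin.ext_iff]
          rw [h0]
          have h := run_fam_build (pF_step w_e) (pF_exit w_e)
            (run_copy_build (fun _ => rfl)
              (v.map Sum.inl ++ (Sum.inr true :: x.reverse.map Sum.inl))) 0
          simpa using h
        · -- u = v = [], x ∈ R: impossible
          exact absurd heval.symm (by simpa [evalW] using evalW_ne_one f (hRne x hx))
    · -- x = []: forces u = v = []
      have huv : u ++ v = [] := by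
        by_contra hne
        exact evalW_ne_one f hne (by simpa [evalW] using heval)
      obtain ⟨rfl, rfl⟩ := List.append_eq_nil_iff.mp huv
      have heval' : evalW f (w_e ++ w_e) = evalW f w_e := by
        rw [evalW_append, hevale, ← WithOne.coe_mul, (hid e).1]
      refine ⟨_, ⟨w_e, w_e, w_e, hwe, hwe, hwe, heval', rfl⟩, .s0 0, by simp [initsE],
        St.s2 (Fin.last w_e.length), by simp [accsE], ?_⟩
      rw [table_word_form w_e w_e w_e]
      have h0 : St.s0 (0 : Fin (w_e.length + 1)) = s0F w_e 0 := by
        simp [s0F, Fin.ext_iff]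
      rw [h0]
      have hlast : s2F w_e w_e.reverse.length = St.s2 (Fin.last w_e.length) := by
        simp [s2F, Fin.ext_iff, Fin.last]
      have hcont2 : TrRun (trE w_e) (s2F w_e 0) (w_e.reverse.map Sum.inl) []
          (St.s2 (Fin.last w_e.length)) := by
        have h := run_fam_build_noexit (s2F_step w_e) 0 (by simp)
        rw [hlast] at h
        simpa using h
      have hcont1 : TrRun (trE w_e) (s1F w_e 0)
          (w_e.map Sum.inl ++ (Sum.inr true :: w_e.reverse.map Sum.inl))
          [Sum.inr true] (St.s2 (Fin.last w_e.length)) := by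
        have h := run_fam_build (s1F_step w_e) (s1F_exit w_e) hcont2 0
        simpa using h
      have h := run_fam_build (s0F_step w_e) (s0F_exit w_e) hcont1 0
      have hy : (List.map Sum.inl [] ++ [Sum.inr false] ++ List.map Sum.inl [] ++
          [Sum.inr true] ++ (List.map Sum.inl ([] : List A)).reverse :
            List (A ⊕ Bool)) = [Sum.inr false, Sum.inr true] := by simp
      rw [hy]
      simpa using h

end Image


/-- Every monoid (here: semigroup with a two-sided identity element) that is
word-hyperbolic as a semigroup, with respect to a regular combing `R ⊆ A⁺`, is
`1`-extendable: `S^1` is word-hyperbolic with respect to `R ∪ {ε}`. -/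

theorem monoid_one_extendable {A S : Type*} [Fintype A] [Semigroup S]
    (f : A → S)
    (hgen : ∀ s : S, ∃ w : List A, w ≠ [] ∧ evalW f w = ↑s)
    (R : Language A) (hRne : ∀ w ∈ R, w ≠ [])
    (hreg : R.IsRegular)
    (hcomb : ∀ s : S, ∃ w ∈ R, evalW f w = ↑s)
    (htab : (tableS f R).IsContextFree)
    (hmon : ∃ e : S, ∀ s : S, s * e = s ∧ e * s = s) :
    (R + {[]} : Language A).IsRegular ∧
    (∀ x : WithOne S, ∃ w ∈ (R + {[]} : Language A), evalW f w = x) ∧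
    (tableS f (R + {[]})).IsContextFree := by
  classical
  obtain ⟨e, hid⟩ := hmon
  obtain ⟨w_e, hwe, hevale⟩ := hcomb e
  refine ⟨regular_union_eps R hreg, ?_, ?_⟩
  · intro x
    rcases eq_or_ne x 1 with rfl | hx
    · exact ⟨[], (Language.mem_add _ _ _).2 (Or.inr rfl), rfl⟩
    · obtain ⟨s, rfl⟩ := WithOne.ne_one_iff_exists.mp hx
      obtain ⟨w, hw, hew⟩ := hcomb s
      exact ⟨w, (Language.mem_add _ _ _).2 (Or.inl hw), hew⟩
  · rw [← image_eq f R hRne w_e hwe e hevale hid]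
    exact trLang_isContextFree mem_allSt htab (trE w_e) (initsE w_e) (accsE w_e)
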